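/- (Theorem 1, series for the individual interference power, stated as an identity in [0,∞].) Fix real parameters q > 0, s ≥ 0, α > 0, m > 0, a disk radius R > 0, a receiver location with 0 < ‖v_0‖ < R, band edges f_s < f_e, a receiver frequency f_0 ∈ (f_s, f_e), and a measurable function Υ : [0,∞) → [0,∞). Set ω_min = min(f_e - f_0, f_0 - f_s) and ω_max = max(f_e - f_0, f_0 - f_s). Define the densities: f_H(h) = (m^m/Γ(m)) h^{m-1} e^{-m h} for h > 0; f_L(ℓ) = 2ℓ/R² for 0 < ℓ ≤ R - ‖v_0‖ and f_L(ℓ) = (2ℓ/(πR²)) arccos((‖v_0‖² - R² + ℓ²)/(2ℓ‖v_0‖)) for R - ‖v_0‖ < ℓ ≤ R + ‖v_0‖; and f_Ω(ω) = 2/(f_e - f_s) for 0 < ω ≤ ω_min and f_Ω(ω) = 1/(f_e - f_s) for ω_min < ω ≤ ω_max. Then the triple Lebesgue integral ∫_0^∞ ∫_0^{R+‖v_0‖} ∫_0^{ω_max} e^{s q h ℓ^{-α} Υ(ω)} f_Ω(ω) f_L(ℓ) f_H(h) dω dℓ dh, taken in the extended nonnegative reals, equals ∑_{n=0}^{∞}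 [(q s)^n / n!] · [m^{-n} Γ(n+m)/Γ(m)] · [2 γ_n κ_n / (R² (f_e - f_s))], where γ_n = ∫_0^{ω_min} Υ(ω)^n dω + ∫_0^{ω_max} Υ(ω)^n dω and κ_n = ∫_0^{R-‖v_0‖} ℓ^{1-nα} dℓ + ∫_{R-‖v_0‖}^{R+‖v_0‖} (ℓ^{1-nα}/π) arccos((‖v_0‖² - R² + ℓ²)/(2ℓ‖v_0‖)) dℓ, with both sides possibly equal to +∞. -/

import Mathlib

open MeasureTheory Real

lemma aux_exp_tsum (k h l u A B C : ℝ) (hk : 0 ≤ k) (hh : 0 ≤ h) (hl : 0 ≤ l) (hu : 0 ≤ u)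
    (hA : 0 ≤ A) (hB : 0 ≤ B) (hC : 0 ≤ C) :
    ENNReal.ofReal (Real.exp (k * h * l * u) * A * B * C)
      = ∑' n : ℕ, ENNReal.ofReal (k ^ n / (n.factorial : ℝ))
          * (ENNReal.ofReal (h ^ n * C) * (ENNReal.ofReal (l ^ n * B)
              * ENNReal.ofReal (u ^ n * A))) := by
  have hexp : Real.exp (k * h * l * u) = ∑' n : ℕ, (k * h * l * u) ^ n / (n.factorial : ℝ) := by
    rw [Real.exp_eq_exp_ℝ, NormedSpace.exp_eq_tsum_div]
  rw [hexp, ← tsum_mul_right, ← tsum_mul_right, ← tsum_mul_right,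
    ENNReal.ofReal_tsum_of_nonneg (fun n => by positivity)
      ((((Real.summable_pow_div_factorial _).mul_right A).mul_right B).mul_right C)]
  refine tsum_congr fun n => ?_
  have e1 : (k * h * l * u) ^ n / (n.factorial : ℝ) * A * B * C
      = k ^ n / (n.factorial : ℝ) * ((h ^ n * C) * ((l ^ n * B) * (u ^ n * A))) := by
    rw [mul_pow, mul_pow, mul_pow]; ring
  rw [e1, ENNReal.ofReal_mul (show (0:ℝ) ≤ k ^ n / (n.factorial : ℝ) by positivity)]
  congr 1
  rw [ENNReal.ofReal_mul (show (0:ℝ) ≤ h ^ n * C by positivity)]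
  congr 1
  rw [ENNReal.ofReal_mul (show (0:ℝ) ≤ l ^ n * B by positivity)]

lemma aux_gamma (m : ℝ) (hm : 0 < m) (n : ℕ) :
    (∫⁻ h in Set.Ioi (0:ℝ),
        ENNReal.ofReal (h ^ n * (m ^ m / Real.Gamma m * h ^ (m - 1) * Real.exp (-(m * h)))))
      = ENNReal.ofReal (m ^ (-(n : ℝ)) * Real.Gamma ((n : ℝ) + m) / Real.Gamma m) := by
  have hΓm : 0 < Real.Gamma m := Real.Gamma_pos_of_pos hm
  have ha : 0 < (n : ℝ) + m := by positivity
  have step1 : ∀ᵐ h ∂(volume : Measure ℝ), h ∈ Set.Ioi (0:ℝ) →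
      ENNReal.ofReal (h ^ n * (m ^ m / Real.Gamma m * h ^ (m - 1) * Real.exp (-(m * h))))
        = ENNReal.ofReal (m ^ m / Real.Gamma m)
            * ENNReal.ofReal (h ^ (((n : ℝ) + m) - 1) * Real.exp (-(m * h))) := by
    refine ae_of_all _ fun h hh => ?_
    rw [← ENNReal.ofReal_mul (by positivity)]
    congr 1
    rw [← Real.rpow_natCast h n, show ((n : ℝ) + m) - 1 = (n : ℝ) + (m - 1) by ring,
      Real.rpow_add hh]
    ring
  have hmeas : Measurable fun h : ℝ =>
      ENNReal.ofReal (h ^ (((n : ℝ) + m) - 1) * Real.exp (-(m * h))) := by fun_prop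
  rw [setLIntegral_congr_fun_ae measurableSet_Ioi step1,
    lintegral_const_mul'' _ hmeas.aemeasurable]
  have hint : IntegrableOn (fun h : ℝ => h ^ (((n : ℝ) + m) - 1) * Real.exp (-(m * h)))
      (Set.Ioi 0) := by
    have := integrableOn_rpow_mul_exp_neg_mul_rpow (s := ((n : ℝ) + m) - 1) (p := 1)
      (by linarith) one_pos hm
    simpa [Real.rpow_one, neg_mul] using this
  have hgt : (∫⁻ h in Set.Ioi (0:ℝ), ENNReal.ofReal (h ^ (((n : ℝ) + m) - 1)
        * Real.exp (-(m * h))))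
      = ENNReal.ofReal ((1 / m) ^ ((n : ℝ) + m) * Real.Gamma ((n : ℝ) + m)) := by
    rw [← MeasureTheory.ofReal_integral_eq_lintegral_ofReal hint
      ((ae_restrict_iff' measurableSet_Ioi).mpr (ae_of_all _ fun x hx => by have hx' : (0:ℝ) < x := hx; positivity)),
      Real.integral_rpow_mul_exp_neg_mul_Ioi ha hm]
  rw [hgt, ← ENNReal.ofReal_mul (by positivity)]
  congr 1
  have h1 : (1 / m : ℝ) ^ ((n : ℝ) + m) = m ^ (-((n : ℝ) + m)) := by
    rw [one_div, Real.inv_rpow hm.le, ← Real.rpow_neg hm.le]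
  have h2 : m ^ m * m ^ (-((n : ℝ) + m)) = m ^ (-(n : ℝ)) := by
    rw [← Real.rpow_add hm]; congr 1; ring
  rw [h1, show m ^ m / Real.Gamma m * (m ^ (-((n : ℝ) + m)) * Real.Gamma ((n : ℝ) + m))
      = (m ^ m * m ^ (-((n : ℝ) + m))) * Real.Gamma ((n : ℝ) + m) / Real.Gamma m by ring, h2]

lemma aux_omega (fs fe f0 : ℝ) (Υ : ℝ → ℝ) (hΥmeas : Measurable Υ) (hΥnn : ∀ ω, 0 ≤ Υ ω)
    (hc : 0 < fe - fs) (hwmin : 0 < min (fe - f0) (f0 - fs)) (n : ℕ) :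
    (∫⁻ ω in Set.Ioc (0:ℝ) (max (fe - f0) (f0 - fs)),
        ENNReal.ofReal (Υ ω ^ n
          * (if ω ≤ min (fe - f0) (f0 - fs) then 2 / (fe - fs) else 1 / (fe - fs))))
      = ENNReal.ofReal (1 / (fe - fs))
          * ((∫⁻ ω in Set.Ioc (0:ℝ) (min (fe - f0) (f0 - fs)), ENNReal.ofReal (Υ ω ^ n))
            + ∫⁻ ω in Set.Ioc (0:ℝ) (max (fe - f0) (f0 - fs)), ENNReal.ofReal (Υ ω ^ n)) := by
  have hmeas : Measurable fun ω => ENNReal.ofReal (Υ ω ^ n) :=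
    (hΥmeas.pow_const n).ennreal_ofReal
  have hsplit : Set.Ioc (0:ℝ) (max (fe - f0) (f0 - fs))
      = Set.Ioc 0 (min (fe - f0) (f0 - fs))
        ∪ Set.Ioc (min (fe - f0) (f0 - fs)) (max (fe - f0) (f0 - fs)) :=
    (Set.Ioc_union_Ioc_eq_Ioc hwmin.le min_le_max).symm
  rw [hsplit, lintegral_union measurableSet_Ioc (Set.Ioc_disjoint_Ioc_of_le le_rfl),
    lintegral_union measurableSet_Ioc (Set.Ioc_disjoint_Ioc_of_le le_rfl)]
  have h1 : (∫⁻ ω in Set.Ioc (0:ℝ) (min (fe - f0) (f0 - fs)),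
      ENNReal.ofReal (Υ ω ^ n
        * (if ω ≤ min (fe - f0) (f0 - fs) then 2 / (fe - fs) else 1 / (fe - fs))))
      = (∫⁻ ω in Set.Ioc (0:ℝ) (min (fe - f0) (f0 - fs)), ENNReal.ofReal (Υ ω ^ n))
          * ENNReal.ofReal (2 / (fe - fs)) := by
    rw [setLIntegral_congr_fun_ae measurableSet_Ioc (ae_of_all _ fun ω hω => by
      rw [if_pos hω.2, ENNReal.ofReal_mul (pow_nonneg (hΥnn ω) n)]),
      lintegral_mul_const'' _ hmeas.aemeasurable]
  have h2 : (∫⁻ ω in Set.Ioc (min (fe - f0) (f0 - fs)) (max (fe - f0) (f0 - fs)),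
      ENNReal.ofReal (Υ ω ^ n
        * (if ω ≤ min (fe - f0) (f0 - fs) then 2 / (fe - fs) else 1 / (fe - fs))))
      = (∫⁻ ω in Set.Ioc (min (fe - f0) (f0 - fs)) (max (fe - f0) (f0 - fs)),
          ENNReal.ofReal (Υ ω ^ n)) * ENNReal.ofReal (1 / (fe - fs)) := by
    rw [setLIntegral_congr_fun_ae measurableSet_Ioc (ae_of_all _ fun ω hω => by
      rw [if_neg (not_le.mpr hω.1), ENNReal.ofReal_mul (pow_nonneg (hΥnn ω) n)]),
      lintegral_mul_const'' _ hmeas.aemeasurable]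
  rw [h1, h2, show ENNReal.ofReal (2 / (fe - fs))
      = ENNReal.ofReal (1 / (fe - fs)) + ENNReal.ofReal (1 / (fe - fs)) by
    rw [← ENNReal.ofReal_add (by positivity) (by positivity)]; congr 1; ring]
  ring

lemma aux_ell (α R v0 : ℝ) (hR : 0 < R) (hv0 : 0 < v0) (hR1 : 0 < R - v0) (n : ℕ) :
    (∫⁻ ℓ in Set.Ioc (0:ℝ) (R + v0),
        ENNReal.ofReal (ℓ ^ (-((n : ℝ) * α))
          * (if ℓ ≤ R - v0 then 2 * ℓ / R ^ 2
             else 2 * ℓ / (π * R ^ 2)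
               * Real.arccos ((v0 ^ 2 - R ^ 2 + ℓ ^ 2) / (2 * ℓ * v0)))))
      = ENNReal.ofReal (2 / R ^ 2)
          * ((∫⁻ ℓ in Set.Ioc (0:ℝ) (R - v0), ENNReal.ofReal (ℓ ^ (1 - (n : ℝ) * α)))
            + ∫⁻ ℓ in Set.Ioc (R - v0) (R + v0),
                ENNReal.ofReal (ℓ ^ (1 - (n : ℝ) * α) / π
                  * Real.arccos ((v0 ^ 2 - R ^ 2 + ℓ ^ 2) / (2 * ℓ * v0)))) := by
  have hmeas1 : Measurable fun ℓ : ℝ => ENNReal.ofReal (ℓ ^ (1 - (n : ℝ) * α)) := by fun_prop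
  have hg : Measurable fun ℓ : ℝ => (v0 ^ 2 - R ^ 2 + ℓ ^ 2) / (2 * ℓ * v0) :=
    ((measurable_id.pow_const 2).const_add (v0 ^ 2 - R ^ 2)).div
      ((measurable_id.const_mul 2).mul_const v0)
  have hrpm : Measurable fun ℓ : ℝ => ℓ ^ (1 - (n : ℝ) * α) := by fun_prop
  have hmeas2 : Measurable fun ℓ : ℝ => ENNReal.ofReal (ℓ ^ (1 - (n : ℝ) * α) / π
      * Real.arccos ((v0 ^ 2 - R ^ 2 + ℓ ^ 2) / (2 * ℓ * v0))) :=
    ((hrpm.div_const π).mul (Real.measurable_arccos.comp hg)).ennreal_ofReal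
  have hsplit : Set.Ioc (0:ℝ) (R + v0) = Set.Ioc 0 (R - v0) ∪ Set.Ioc (R - v0) (R + v0) :=
    (Set.Ioc_union_Ioc_eq_Ioc hR1.le (by linarith)).symm
  rw [hsplit, lintegral_union measurableSet_Ioc (Set.Ioc_disjoint_Ioc_of_le le_rfl)]
  have hrp : ∀ ℓ : ℝ, 0 < ℓ → ℓ ^ (1 - (n : ℝ) * α) = ℓ * ℓ ^ (-((n : ℝ) * α)) := fun ℓ hℓ => by
    rw [show (1 - (n : ℝ) * α) = 1 + -((n : ℝ) * α) by ring, Real.rpow_add hℓ, Real.rpow_one]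
  have h1 : (∫⁻ ℓ in Set.Ioc (0:ℝ) (R - v0),
      ENNReal.ofReal (ℓ ^ (-((n : ℝ) * α))
        * (if ℓ ≤ R - v0 then 2 * ℓ / R ^ 2
           else 2 * ℓ / (π * R ^ 2)
             * Real.arccos ((v0 ^ 2 - R ^ 2 + ℓ ^ 2) / (2 * ℓ * v0)))))
      = (∫⁻ ℓ in Set.Ioc (0:ℝ) (R - v0), ENNReal.ofReal (ℓ ^ (1 - (n : ℝ) * α)))
          * ENNReal.ofReal (2 / R ^ 2) := by
    rw [← lintegral_mul_const'' _ hmeas1.aemeasurable]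
    refine setLIntegral_congr_fun_ae measurableSet_Ioc (ae_of_all _ fun ℓ hℓ => ?_)
    rw [if_pos hℓ.2, ← ENNReal.ofReal_mul (Real.rpow_nonneg hℓ.1.le _)]
    congr 1
    rw [hrp ℓ hℓ.1]; ring
  have h2 : (∫⁻ ℓ in Set.Ioc (R - v0) (R + v0),
      ENNReal.ofReal (ℓ ^ (-((n : ℝ) * α))
        * (if ℓ ≤ R - v0 then 2 * ℓ / R ^ 2
           else 2 * ℓ / (π * R ^ 2)
             * Real.arccos ((v0 ^ 2 - R ^ 2 + ℓ ^ 2) / (2 * ℓ * v0)))))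
      = (∫⁻ ℓ in Set.Ioc (R - v0) (R + v0),
          ENNReal.ofReal (ℓ ^ (1 - (n : ℝ) * α) / π
            * Real.arccos ((v0 ^ 2 - R ^ 2 + ℓ ^ 2) / (2 * ℓ * v0))))
          * ENNReal.ofReal (2 / R ^ 2) := by
    rw [← lintegral_mul_const'' _ hmeas2.aemeasurable]
    refine setLIntegral_congr_fun_ae measurableSet_Ioc (ae_of_all _ fun ℓ hℓ => ?_)
    have hℓ0 : (0:ℝ) < ℓ := hR1.trans hℓ.1
    rw [if_neg (not_le.mpr hℓ.1), ← ENNReal.ofReal_mul (mul_nonneg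
      (div_nonneg (Real.rpow_nonneg hℓ0.le _) Real.pi_pos.le) (Real.arccos_nonneg _))]
    congr 1
    rw [hrp ℓ hℓ0]; ring
  rw [h1, h2]
  ring

/-- Theorem 1, series form of the MGF-type integral of the individual interference power,
stated as an identity in `[0,∞]`.  The triple Lebesgue integral of
`e^{s q h ℓ^{-α} Υ(ω)} f_Ω(ω) f_L(ℓ) f_H(h)` over `(h, ℓ, ω)` equals
`∑_{n≥0} ((qs)^n/n!) (m^{-n} Γ(n+m)/Γ(m)) (2 γ_n κ_n / (R² (f_e - f_s)))`,
where `f_H` is the Nakagami-`m` power (Gamma) density, `f_L` the BPP distance density on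
the disk of radius `R` seen from a receiver at distance `‖v₀‖` from the center, and `f_Ω`
the piecewise-uniform spectral-distance density on the band `[f_s, f_e]`. -/
theorem mgf_individual_interference_series
    (q s α m R v0 fs fe f0 : ℝ) (Υ : ℝ → ℝ)
    (hq : 0 < q) (hs : 0 ≤ s) (hα : 0 < α) (hm : 0 < m) (hR : 0 < R)
    (hv0 : 0 < v0) (hv0R : v0 < R) (hfsfe : fs < fe) (hf0 : f0 ∈ Set.Ioo fs fe)
    (hΥmeas : Measurable Υ) (hΥnn : ∀ ω, 0 ≤ Υ ω) :
    (∫⁻ h in Set.Ioi (0:ℝ),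
      ∫⁻ ℓ in Set.Ioc (0:ℝ) (R + v0),
        ∫⁻ ω in Set.Ioc (0:ℝ) (max (fe - f0) (f0 - fs)),
          ENNReal.ofReal
            (Real.exp (s * q * h * ℓ ^ (-α) * Υ ω)
              * (if ω ≤ min (fe - f0) (f0 - fs) then 2 / (fe - fs) else 1 / (fe - fs))
              * (if ℓ ≤ R - v0 then 2 * ℓ / R ^ 2
                 else 2 * ℓ / (π * R ^ 2)
                   * Real.arccos ((v0 ^ 2 - R ^ 2 + ℓ ^ 2) / (2 * ℓ * v0)))
              * (m ^ m / Real.Gamma m * h ^ (m - 1) * Real.exp (-(m * h)))))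
    = ∑' n : ℕ,
        ENNReal.ofReal ((q * s) ^ n / (n.factorial : ℝ)
            * (m ^ (-(n : ℝ)) * Real.Gamma ((n : ℝ) + m) / Real.Gamma m)
            * (2 / (R ^ 2 * (fe - fs))))
        * ((∫⁻ ω in Set.Ioc (0:ℝ) (min (fe - f0) (f0 - fs)), ENNReal.ofReal (Υ ω ^ n))
            + ∫⁻ ω in Set.Ioc (0:ℝ) (max (fe - f0) (f0 - fs)), ENNReal.ofReal (Υ ω ^ n))
        * ((∫⁻ ℓ in Set.Ioc (0:ℝ) (R - v0), ENNReal.ofReal (ℓ ^ (1 - (n : ℝ) * α)))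
            + ∫⁻ ℓ in Set.Ioc (R - v0) (R + v0),
                ENNReal.ofReal (ℓ ^ (1 - (n : ℝ) * α) / π
                  * Real.arccos ((v0 ^ 2 - R ^ 2 + ℓ ^ 2) / (2 * ℓ * v0)))) := by
  obtain ⟨hfs0, hf0e⟩ := hf0
  have hc : 0 < fe - fs := by linarith
  have hwmin : 0 < min (fe - f0) (f0 - fs) := lt_min (by linarith) (by linarith)
  have hR1 : 0 < R - v0 := by linarith
  have hΓm : 0 < Real.Gamma m := Real.Gamma_pos_of_pos hm
  have hg : Measurable fun ℓ : ℝ => (v0 ^ 2 - R ^ 2 + ℓ ^ 2) / (2 * ℓ * v0) :=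
    ((measurable_id.pow_const 2).const_add (v0 ^ 2 - R ^ 2)).div
      ((measurable_id.const_mul 2).mul_const v0)
  have measW : ∀ n : ℕ, Measurable fun ω : ℝ => ENNReal.ofReal (Υ ω ^ n * (if ω ≤ min (fe - f0) (f0 - fs) then 2 / (fe - fs) else 1 / (fe - fs))) := fun n =>
    ((hΥmeas.pow_const n).mul (Measurable.ite
      (measurableSet_le measurable_id measurable_const)
      measurable_const measurable_const)).ennreal_ofReal
  have measQ : ∀ n : ℕ, Measurable fun ℓ : ℝ =>
      ENNReal.ofReal (ℓ ^ (-((n : ℝ) * α)) * (if ℓ ≤ R - v0 then 2 * ℓ / R ^ 2 else 2 * ℓ / (π * R ^ 2) * Real.arccos ((v0 ^ 2 - R ^ 2 + ℓ ^ 2) / (2 * ℓ * v0)))) := fun n => by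
    have h1 : Measurable fun ℓ : ℝ => ℓ ^ (-((n : ℝ) * α)) := by fun_prop
    exact (h1.mul (Measurable.ite (measurableSet_le measurable_id measurable_const)
      ((measurable_id.const_mul 2).div_const _)
      (((measurable_id.const_mul 2).div_const _).mul
        (Real.measurable_arccos.comp hg)))).ennreal_ofReal
  have measP : ∀ n : ℕ, Measurable fun h : ℝ => ENNReal.ofReal (h ^ n * (m ^ m / Real.Gamma m * h ^ (m - 1) * Real.exp (-(m * h)))) := fun n => by
    fun_prop
  have inner : ∀ h ∈ Set.Ioi (0:ℝ),
      (∫⁻ ℓ in Set.Ioc (0:ℝ) (R + v0),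
        ∫⁻ ω in Set.Ioc (0:ℝ) (max (fe - f0) (f0 - fs)),
          ENNReal.ofReal (Real.exp (s * q * h * ℓ ^ (-α) * Υ ω) * (if ω ≤ min (fe - f0) (f0 - fs) then 2 / (fe - fs) else 1 / (fe - fs)) * (if ℓ ≤ R - v0 then 2 * ℓ / R ^ 2 else 2 * ℓ / (π * R ^ 2) * Real.arccos ((v0 ^ 2 - R ^ 2 + ℓ ^ 2) / (2 * ℓ * v0))) * (m ^ m / Real.Gamma m * h ^ (m - 1) * Real.exp (-(m * h)))))
      = ∑' n : ℕ, (ENNReal.ofReal ((s * q) ^ n / (n.factorial : ℝ)) * (∫⁻ ω in Set.Ioc (0:ℝ) (max (fe - f0) (f0 - fs)), ENNReal.ofReal (Υ ω ^ n * (if ω ≤ min (fe - f0) (f0 - fs) then 2 / (fe - fs) else 1 / (fe - fs)))) * (∫⁻ ℓ in Set.Ioc (0:ℝ) (R + v0), ENNReal.ofReal (ℓ ^ (-((n : ℝ) * α)) * (if ℓ ≤ R - v0 then 2 * ℓ / R ^ 2 else 2 * ℓ / (π * R ^ 2) * Real.arccos ((v0 ^ 2 - R ^ 2 + ℓ ^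 2) / (2 * ℓ * v0)))))) * ENNReal.ofReal (h ^ n * (m ^ m / Real.Gamma m * h ^ (m - 1) * Real.exp (-(m * h)))) := by
    intro h hh
    have hh0 : (0:ℝ) < h := hh
    have hCnn : 0 ≤ (m ^ m / Real.Gamma m * h ^ (m - 1) * Real.exp (-(m * h))) := by positivity
    have stepl : ∀ ℓ ∈ Set.Ioc (0:ℝ) (R + v0),
        (∫⁻ ω in Set.Ioc (0:ℝ) (max (fe - f0) (f0 - fs)),
          ENNReal.ofReal (Real.exp (s * q * h * ℓ ^ (-α) * Υ ω) * (if ω ≤ min (fe - f0) (f0 - fs) then 2 / (fe - fs) else 1 / (fe - fs)) * (if ℓ ≤ R - v0 then 2 * ℓ / R ^ 2 else 2 * ℓ / (π * R ^ 2) * Real.arccos ((v0 ^ 2 - R ^ 2 + ℓ ^ 2) / (2 * ℓ * v0))) * (m ^ m / Real.Gamma m * h ^ (m - 1) * Real.exp (-(m * h)))))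
        = ∑' n : ℕ, (ENNReal.ofReal ((s * q) ^ n / (n.factorial : ℝ)) * (∫⁻ ω in Set.Ioc (0:ℝ) (max (fe - f0) (f0 - fs)), ENNReal.ofReal (Υ ω ^ n * (if ω ≤ min (fe - f0) (f0 - fs) then 2 / (fe - fs) else 1 / (fe - fs)))) * ENNReal.ofReal (h ^ n * (m ^ m / Real.Gamma m * h ^ (m - 1) * Real.exp (-(m * h))))) * ENNReal.ofReal (ℓ ^ (-((n : ℝ) * α)) * (if ℓ ≤ R - v0 then 2 * ℓ / R ^ 2 else 2 * ℓ / (π * R ^ 2) * Real.arccos ((v0 ^ 2 - R ^ 2 + ℓ ^ 2) / (2 * ℓ * v0)))) := by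
      intro ℓ hℓ
      have hℓ0 : (0:ℝ) < ℓ := hℓ.1
      have hBnn : 0 ≤ (if ℓ ≤ R - v0 then 2 * ℓ / R ^ 2 else 2 * ℓ / (π * R ^ 2) * Real.arccos ((v0 ^ 2 - R ^ 2 + ℓ ^ 2) / (2 * ℓ * v0))) := by
        split_ifs with hcase
        · positivity
        · exact mul_nonneg (by positivity) (Real.arccos_nonneg _)
      have hpw : ∀ n : ℕ, ((ℓ ^ (-α) : ℝ)) ^ n = ℓ ^ (-((n : ℝ) * α)) := fun n => by
        rw [← Real.rpow_natCast (ℓ ^ (-α)) n, ← Real.rpow_mul hℓ0.le]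
        congr 1; ring
      calc (∫⁻ ω in Set.Ioc (0:ℝ) (max (fe - f0) (f0 - fs)),
            ENNReal.ofReal (Real.exp (s * q * h * ℓ ^ (-α) * Υ ω) * (if ω ≤ min (fe - f0) (f0 - fs) then 2 / (fe - fs) else 1 / (fe - fs)) * (if ℓ ≤ R - v0 then 2 * ℓ / R ^ 2 else 2 * ℓ / (π * R ^ 2) * Real.arccos ((v0 ^ 2 - R ^ 2 + ℓ ^ 2) / (2 * ℓ * v0))) * (m ^ m / Real.Gamma m * h ^ (m - 1) * Real.exp (-(m * h)))))
          = ∫⁻ ω in Set.Ioc (0:ℝ) (max (fe - f0) (f0 - fs)),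
              ∑' n : ℕ, ENNReal.ofReal ((s * q) ^ n / (n.factorial : ℝ)) * (ENNReal.ofReal (h ^ n * (m ^ m / Real.Gamma m * h ^ (m - 1) * Real.exp (-(m * h)))) * (ENNReal.ofReal (ℓ ^ (-((n : ℝ) * α)) * (if ℓ ≤ R - v0 then 2 * ℓ / R ^ 2 else 2 * ℓ / (π * R ^ 2) * Real.arccos ((v0 ^ 2 - R ^ 2 + ℓ ^ 2) / (2 * ℓ * v0)))) * ENNReal.ofReal (Υ ω ^ n * (if ω ≤ min (fe - f0) (f0 - fs) then 2 / (fe - fs) else 1 / (fe - fs))))) := by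
            refine lintegral_congr fun ω => ?_
            have hAnn : 0 ≤ (if ω ≤ min (fe - f0) (f0 - fs) then 2 / (fe - fs) else 1 / (fe - fs)) := by split_ifs <;> positivity
            rw [aux_exp_tsum (s * q) h (ℓ ^ (-α)) (Υ ω) _ _ _
              (mul_nonneg hs hq.le) hh0.le (Real.rpow_nonneg hℓ0.le _) (hΥnn ω)
              hAnn hBnn hCnn]
            exact tsum_congr fun n => by rw [hpw n]
        _ = ∑' n : ℕ, ∫⁻ ω in Set.Ioc (0:ℝ) (max (fe - f0) (f0 - fs)),
              ENNReal.ofReal ((s * q) ^ n / (n.factorial : ℝ)) * (ENNReal.ofReal (h ^ n * (m ^ m / Real.Gamma m * h ^ (m - 1) * Real.exp (-(m * h)))) * (ENNReal.ofReal (ℓ ^ (-((n : ℝ) * α)) * (if ℓ ≤ R - v0 then 2 * ℓ / R ^ 2 else 2 * ℓ / (π * R ^ 2) * Real.arccos ((v0 ^ 2 - R ^ 2 + ℓ ^ 2) / (2 * ℓ * v0)))) * ENNReal.ofReal (Υ ω ^ n * (if ω ≤ min (fe - f0) (f0 - fs) then 2 / (fe - fs) else 1 / (fe - fs))))) :=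
            lintegral_tsum fun n =>
              ((((measW n).const_mul _).const_mul _).const_mul _).aemeasurable
        _ = ∑' n : ℕ, (ENNReal.ofReal ((s * q) ^ n / (n.factorial : ℝ)) * (∫⁻ ω in Set.Ioc (0:ℝ) (max (fe - f0) (f0 - fs)), ENNReal.ofReal (Υ ω ^ n * (if ω ≤ min (fe - f0) (f0 - fs) then 2 / (fe - fs) else 1 / (fe - fs)))) * ENNReal.ofReal (h ^ n * (m ^ m / Real.Gamma m * h ^ (m - 1) * Real.exp (-(m * h))))) * ENNReal.ofReal (ℓ ^ (-((n : ℝ) * α)) * (if ℓ ≤ R - v0 then 2 * ℓ / R ^ 2 else 2 * ℓ / (π * R ^ 2) * Real.arccos ((v0 ^ 2 - R ^ 2 + ℓ ^ 2) / (2 * ℓ * v0)))) := by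
            refine tsum_congr fun n => ?_
            calc (∫⁻ ω in Set.Ioc (0:ℝ) (max (fe - f0) (f0 - fs)),
                  ENNReal.ofReal ((s * q) ^ n / (n.factorial : ℝ)) * (ENNReal.ofReal (h ^ n * (m ^ m / Real.Gamma m * h ^ (m - 1) * Real.exp (-(m * h)))) * (ENNReal.ofReal (ℓ ^ (-((n : ℝ) * α)) * (if ℓ ≤ R - v0 then 2 * ℓ / R ^ 2 else 2 * ℓ / (π * R ^ 2) * Real.arccos ((v0 ^ 2 - R ^ 2 + ℓ ^ 2) / (2 * ℓ * v0)))) * ENNReal.ofReal (Υ ω ^ n * (if ω ≤ min (fe - f0) (f0 - fs) then 2 / (fe - fs) else 1 / (fe - fs))))))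
                = ∫⁻ ω in Set.Ioc (0:ℝ) (max (fe - f0) (f0 - fs)),
                    (ENNReal.ofReal ((s * q) ^ n / (n.factorial : ℝ)) * ENNReal.ofReal (h ^ n * (m ^ m / Real.Gamma m * h ^ (m - 1) * Real.exp (-(m * h)))) * ENNReal.ofReal (ℓ ^ (-((n : ℝ) * α)) * (if ℓ ≤ R - v0 then 2 * ℓ / R ^ 2 else 2 * ℓ / (π * R ^ 2) * Real.arccos ((v0 ^ 2 - R ^ 2 + ℓ ^ 2) / (2 * ℓ * v0))))) * ENNReal.ofReal (Υ ω ^ n * (if ω ≤ min (fe - f0) (f0 - fs) then 2 / (fe - fs) else 1 / (fe - fs))) := lintegral_congr fun ω => by ring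
              _ = (ENNReal.ofReal ((s * q) ^ n / (n.factorial : ℝ)) * ENNReal.ofReal (h ^ n * (m ^ m / Real.Gamma m * h ^ (m - 1) * Real.exp (-(m * h)))) * ENNReal.ofReal (ℓ ^ (-((n : ℝ) * α)) * (if ℓ ≤ R - v0 then 2 * ℓ / R ^ 2 else 2 * ℓ / (π * R ^ 2) * Real.arccos ((v0 ^ 2 - R ^ 2 + ℓ ^ 2) / (2 * ℓ * v0))))) * (∫⁻ ω in Set.Ioc (0:ℝ) (max (fe - f0) (f0 - fs)), ENNReal.ofReal (Υ ω ^ n * (if ω ≤ min (fe - f0) (f0 - fs) then 2 / (fe - fs) else 1 / (fe - fs)))) :=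
                  lintegral_const_mul'' _ (measW n).aemeasurable
              _ = (ENNReal.ofReal ((s * q) ^ n / (n.factorial : ℝ)) * (∫⁻ ω in Set.Ioc (0:ℝ) (max (fe - f0) (f0 - fs)), ENNReal.ofReal (Υ ω ^ n * (if ω ≤ min (fe - f0) (f0 - fs) then 2 / (fe - fs) else 1 / (fe - fs)))) * ENNReal.ofReal (h ^ n * (m ^ m / Real.Gamma m * h ^ (m - 1) * Real.exp (-(m * h))))) * ENNReal.ofReal (ℓ ^ (-((n : ℝ) * α)) * (if ℓ ≤ R - v0 then 2 * ℓ / R ^ 2 else 2 * ℓ / (π * R ^ 2) * Real.arccos ((v0 ^ 2 - R ^ 2 + ℓ ^ 2) / (2 * ℓ * v0)))) := by ring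
    calc (∫⁻ ℓ in Set.Ioc (0:ℝ) (R + v0),
          ∫⁻ ω in Set.Ioc (0:ℝ) (max (fe - f0) (f0 - fs)),
            ENNReal.ofReal (Real.exp (s * q * h * ℓ ^ (-α) * Υ ω) * (if ω ≤ min (fe - f0) (f0 - fs) then 2 / (fe - fs) else 1 / (fe - fs)) * (if ℓ ≤ R - v0 then 2 * ℓ / R ^ 2 else 2 * ℓ / (π * R ^ 2) * Real.arccos ((v0 ^ 2 - R ^ 2 + ℓ ^ 2) / (2 * ℓ * v0))) * (m ^ m / Real.Gamma m * h ^ (m - 1) * Real.exp (-(m * h)))))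
        = ∫⁻ ℓ in Set.Ioc (0:ℝ) (R + v0),
            ∑' n : ℕ, (ENNReal.ofReal ((s * q) ^ n / (n.factorial : ℝ)) * (∫⁻ ω in Set.Ioc (0:ℝ) (max (fe - f0) (f0 - fs)), ENNReal.ofReal (Υ ω ^ n * (if ω ≤ min (fe - f0) (f0 - fs) then 2 / (fe - fs) else 1 / (fe - fs)))) * ENNReal.ofReal (h ^ n * (m ^ m / Real.Gamma m * h ^ (m - 1) * Real.exp (-(m * h))))) * ENNReal.ofReal (ℓ ^ (-((n : ℝ) * α)) * (if ℓ ≤ R - v0 then 2 * ℓ / R ^ 2 else 2 * ℓ / (π * R ^ 2) * Real.arccos ((v0 ^ 2 - R ^ 2 + ℓ ^ 2) / (2 * ℓ * v0)))) :=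
          setLIntegral_congr_fun_ae measurableSet_Ioc (ae_of_all _ stepl)
      _ = ∑' n : ℕ, ∫⁻ ℓ in Set.Ioc (0:ℝ) (R + v0), (ENNReal.ofReal ((s * q) ^ n / (n.factorial : ℝ)) * (∫⁻ ω in Set.Ioc (0:ℝ) (max (fe - f0) (f0 - fs)), ENNReal.ofReal (Υ ω ^ n * (if ω ≤ min (fe - f0) (f0 - fs) then 2 / (fe - fs) else 1 / (fe - fs)))) * ENNReal.ofReal (h ^ n * (m ^ m / Real.Gamma m * h ^ (m - 1) * Real.exp (-(m * h))))) * ENNReal.ofReal (ℓ ^ (-((n : ℝ) * α)) * (if ℓ ≤ R - v0 then 2 * ℓ / R ^ 2 else 2 * ℓ / (π * R ^ 2) * Real.arccos ((v0 ^ 2 - R ^ 2 + ℓ ^ 2) / (2 * ℓ * v0)))) :=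
          lintegral_tsum fun n => ((measQ n).const_mul _).aemeasurable
      _ = ∑' n : ℕ, (ENNReal.ofReal ((s * q) ^ n / (n.factorial : ℝ)) * (∫⁻ ω in Set.Ioc (0:ℝ) (max (fe - f0) (f0 - fs)), ENNReal.ofReal (Υ ω ^ n * (if ω ≤ min (fe - f0) (f0 - fs) then 2 / (fe - fs) else 1 / (fe - fs)))) * ENNReal.ofReal (h ^ n * (m ^ m / Real.Gamma m * h ^ (m - 1) * Real.exp (-(m * h))))) * (∫⁻ ℓ in Set.Ioc (0:ℝ) (R + v0), ENNReal.ofReal (ℓ ^ (-((n : ℝ) * α)) * (if ℓ ≤ R - v0 then 2 * ℓ / R ^ 2 else 2 * ℓ / (π * R ^ 2) * Real.arccos ((v0 ^ 2 - R ^ 2 + ℓ ^ 2) / (2 * ℓ * v0))))) :=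
          tsum_congr fun n => lintegral_const_mul'' _ (measQ n).aemeasurable
      _ = ∑' n : ℕ, (ENNReal.ofReal ((s * q) ^ n / (n.factorial : ℝ)) * (∫⁻ ω in Set.Ioc (0:ℝ) (max (fe - f0) (f0 - fs)), ENNReal.ofReal (Υ ω ^ n * (if ω ≤ min (fe - f0) (f0 - fs) then 2 / (fe - fs) else 1 / (fe - fs)))) * (∫⁻ ℓ in Set.Ioc (0:ℝ) (R + v0), ENNReal.ofReal (ℓ ^ (-((n : ℝ) * α)) * (if ℓ ≤ R - v0 then 2 * ℓ / R ^ 2 else 2 * ℓ / (π * R ^ 2) * Real.arccos ((v0 ^ 2 - R ^ 2 + ℓ ^ 2) / (2 * ℓ * v0)))))) * ENNReal.ofReal (h ^ n * (m ^ m / Real.Gamma m * h ^ (m - 1) * Real.exp (-(m * h)))) := tsum_congr fun n => by ring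
  calc (∫⁻ h in Set.Ioi (0:ℝ),
        ∫⁻ ℓ in Set.Ioc (0:ℝ) (R + v0),
          ∫⁻ ω in Set.Ioc (0:ℝ) (max (fe - f0) (f0 - fs)),
            ENNReal.ofReal (Real.exp (s * q * h * ℓ ^ (-α) * Υ ω) * (if ω ≤ min (fe - f0) (f0 - fs) then 2 / (fe - fs) else 1 / (fe - fs)) * (if ℓ ≤ R - v0 then 2 * ℓ / R ^ 2 else 2 * ℓ / (π * R ^ 2) * Real.arccos ((v0 ^ 2 - R ^ 2 + ℓ ^ 2) / (2 * ℓ * v0))) * (m ^ m / Real.Gamma m * h ^ (m - 1) * Real.exp (-(m * h)))))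
      = ∫⁻ h in Set.Ioi (0:ℝ), ∑' n : ℕ, (ENNReal.ofReal ((s * q) ^ n / (n.factorial : ℝ)) * (∫⁻ ω in Set.Ioc (0:ℝ) (max (fe - f0) (f0 - fs)), ENNReal.ofReal (Υ ω ^ n * (if ω ≤ min (fe - f0) (f0 - fs) then 2 / (fe - fs) else 1 / (fe - fs)))) * (∫⁻ ℓ in Set.Ioc (0:ℝ) (R + v0), ENNReal.ofReal (ℓ ^ (-((n : ℝ) * α)) * (if ℓ ≤ R - v0 then 2 * ℓ / R ^ 2 else 2 * ℓ / (π * R ^ 2) * Real.arccos ((v0 ^ 2 - R ^ 2 + ℓ ^ 2) / (2 * ℓ * v0)))))) * ENNReal.ofReal (h ^ n * (m ^ m / Real.Gamma m * h ^ (m - 1) * Real.exp (-(m * h)))) :=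
        setLIntegral_congr_fun_ae measurableSet_Ioi (ae_of_all _ inner)
    _ = ∑' n : ℕ, ∫⁻ h in Set.Ioi (0:ℝ), (ENNReal.ofReal ((s * q) ^ n / (n.factorial : ℝ)) * (∫⁻ ω in Set.Ioc (0:ℝ) (max (fe - f0) (f0 - fs)), ENNReal.ofReal (Υ ω ^ n * (if ω ≤ min (fe - f0) (f0 - fs) then 2 / (fe - fs) else 1 / (fe - fs)))) * (∫⁻ ℓ in Set.Ioc (0:ℝ) (R + v0), ENNReal.ofReal (ℓ ^ (-((n : ℝ) * α)) * (if ℓ ≤ R - v0 then 2 * ℓ / R ^ 2 else 2 * ℓ / (π * R ^ 2) * Real.arccos ((v0 ^ 2 - R ^ 2 + ℓ ^ 2) / (2 * ℓ * v0)))))) * ENNReal.ofReal (h ^ n * (m ^ m / Real.Gamma m * h ^ (m - 1) * Real.exp (-(m * h)))) :=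
        lintegral_tsum fun n => ((measP n).const_mul _).aemeasurable
    _ = ∑' n : ℕ, (ENNReal.ofReal ((s * q) ^ n / (n.factorial : ℝ)) * (∫⁻ ω in Set.Ioc (0:ℝ) (max (fe - f0) (f0 - fs)), ENNReal.ofReal (Υ ω ^ n * (if ω ≤ min (fe - f0) (f0 - fs) then 2 / (fe - fs) else 1 / (fe - fs)))) * (∫⁻ ℓ in Set.Ioc (0:ℝ) (R + v0), ENNReal.ofReal (ℓ ^ (-((n : ℝ) * α)) * (if ℓ ≤ R - v0 then 2 * ℓ / R ^ 2 else 2 * ℓ / (π * R ^ 2) * Real.arccos ((v0 ^ 2 - R ^ 2 + ℓ ^ 2) / (2 * ℓ * v0)))))) * (∫⁻ h in Set.Ioi (0:ℝ), ENNReal.ofReal (h ^ n * (m ^ m / Real.Gamma m * h ^ (m - 1) * Real.exp (-(m * h))))) :=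
        tsum_congr fun n => lintegral_const_mul'' _ (measP n).aemeasurable
    _ = _ := by
        refine tsum_congr fun n => ?_
        rw [aux_gamma m hm n, aux_omega fs fe f0 Υ hΥmeas hΥnn hc hwmin n,
          aux_ell α R v0 hR hv0 hR1 n]
        rw [show ENNReal.ofReal ((q * s) ^ n / (n.factorial : ℝ)
              * (m ^ (-(n : ℝ)) * Real.Gamma ((n : ℝ) + m) / Real.Gamma m)
              * (2 / (R ^ 2 * (fe - fs))))
            = ENNReal.ofReal ((s * q) ^ n / (n.factorial : ℝ)) * ENNReal.ofReal (1 / (fe - fs)) * ENNReal.ofReal (2 / R ^ 2)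
              * ENNReal.ofReal (m ^ (-(n : ℝ)) * Real.Gamma ((n : ℝ) + m) / Real.Gamma m) by
          rw [← ENNReal.ofReal_mul (by positivity), ← ENNReal.ofReal_mul (by positivity),
            ← ENNReal.ofReal_mul (by positivity)]
          congr 1
          have hRne : (R : ℝ) ≠ 0 := hR.ne'
          have hcne : fe - fs ≠ 0 := hc.ne'
          field_simp]
        ring
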